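/- There is no sequence X₁, X₂, … of 4-wise independent random variables taking values ±1 with probability 1/2 such that the partial sums S_n = ∑_{i=1}^n X_i are almost surely bounded (i.e., sup_n |S_n| < ∞ a.s. fails whenever the variables are 4-wise independent). -/

import Mathlib

open MeasureTheory ProbabilityTheory

open ENNReal

section Aux

variable {Ω : Type*} [MeasurableSpace Ω] {μ : Measure Ω} [IsProbabilityMeasure μ]
  {X : ℕ → Ω → ℝ}

lemma rad_int {f : Ω → ℝ} (hf : Measurable f) {c : ℝ} (hb : ∀ ω, |f ω| ≤ c) :
    Integrable f μ :=
  (integrable_const c).mono' hf.aestronglyMeasurable (Filter.Eventually.of_forall hb)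

lemma rad_EX (hmeas : ∀ i, Measurable (X i)) (hrange : ∀ i ω, X i ω = 1 ∨ X i ω = -1)
    (hdist : ∀ i, μ {ω | X i ω = 1} = 1/2) (i : ℕ) :
    ∫ ω, X i ω ∂μ = 0 := by
  have hA : MeasurableSet {ω | X i ω = 1} := (hmeas i) (measurableSet_singleton 1)
  have hpt : ∀ ω, X i ω = {ω | X i ω = 1}.indicator (fun _ => (2:ℝ)) ω - 1 := by
    intro ω
    rcases hrange i ω with h | h
    · rw [Set.indicator_of_mem (by simpa using h)]; norm_num [h]
    · rw [Set.indicator_of_notMem (by simp [h]; norm_num)]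
      simp [h]
  rw [integral_congr_ae (Filter.Eventually.of_forall hpt),
    integral_sub ((integrable_const (2:ℝ)).indicator hA) (integrable_const 1),
    integral_indicator_const _ hA]
  simp [measureReal_def, hdist i, ENNReal.toReal_div]

lemma rad_EXX (hmeas : ∀ i, Measurable (X i)) (hrange : ∀ i ω, X i ω = 1 ∨ X i ω = -1)
    (hdist : ∀ i, μ {ω | X i ω = 1} = 1/2)
    (h4indep : ∀ s : Finset ℕ, s.card ≤ 4 →
      iIndepFun (fun i : s => X i) μ)
    {i j : ℕ} (hij : i ≠ j) : ∫ ω, X i ω * X j ω ∂μ = 0 := by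
  have hcard : ({i, j} : Finset ℕ).card ≤ 4 := by
    have := Finset.card_insert_le i ({j} : Finset ℕ)
    simp at this; omega
  have hind := (h4indep {i, j} hcard).indepFun
    (i := ⟨i, by simp⟩) (j := ⟨j, by simp⟩) (by simp [Subtype.ext_iff, hij])
  have := hind.integral_mul_eq_mul_integral
    (rad_int (hmeas i) (c := 1) (fun ω => by rcases hrange i ω with h|h <;> simp [h])).aestronglyMeasurable
    (rad_int (hmeas j) (c := 1) (fun ω => by rcases hrange j ω with h|h <;> simp [h])).aestronglyMeasurable
  rw [show (fun ω => X i ω * X j ω) = (X i) * (X j) from rfl, this,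
    rad_EX hmeas hrange hdist i, zero_mul]

lemma rad_EXXXX (hmeas : ∀ i, Measurable (X i)) (hrange : ∀ i ω, X i ω = 1 ∨ X i ω = -1)
    (hdist : ∀ i, μ {ω | X i ω = 1} = 1/2)
    (h4indep : ∀ s : Finset ℕ, s.card ≤ 4 →
      iIndepFun (fun i : s => X i) μ)
    {i j k l : ℕ} (hij : i ≠ j) (hik : i ≠ k) (hil : i ≠ l)
    (hjk : j ≠ k) (hjl : j ≠ l) (hkl : k ≠ l) :
    ∫ ω, X i ω * X j ω * X k ω * X l ω ∂μ = 0 := by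
  have hcard : ({i, j, k, l} : Finset ℕ).card ≤ 4 := by
    have h1 := Finset.card_insert_le i ({j, k, l} : Finset ℕ)
    have h2 := Finset.card_insert_le j ({k, l} : Finset ℕ)
    have h3 := Finset.card_insert_le k ({l} : Finset ℕ)
    simp at h3; omega
  have hind := (h4indep {i, j, k, l} hcard).indepFun_mul_mul
    (fun a => hmeas a)
    ⟨i, by simp⟩ ⟨j, by simp⟩ ⟨k, by simp⟩ ⟨l, by simp⟩
    (by simp [Subtype.ext_iff, hik]) (by simp [Subtype.ext_iff, hil])
    (by simp [Subtype.ext_iff, hjk]) (by simp [Subtype.ext_iff, hjl])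
  have hint : ∀ a b : ℕ, Integrable (X a * X b) μ :=
    fun a b => rad_int ((hmeas a).mul (hmeas b)) (c := 1) (fun ω => by
      rcases hrange a ω with h|h <;> rcases hrange b ω with h'|h' <;>
        simp [Pi.mul_apply, h, h'])
  have hmul := hind.integral_mul_eq_mul_integral (hint i j).aestronglyMeasurable (hint k l).aestronglyMeasurable
  calc ∫ ω, X i ω * X j ω * X k ω * X l ω ∂μ
      = ∫ ω, (X i * X j) ω * (X k * X l) ω ∂μ := by
        simp only [Pi.mul_apply]; congr 1; ext ω; ring
    _ = 0 := by
        have h2 : integral μ (X i * X j) = 0 := rad_EXX hmeas hrange hdist h4indep hij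
        show integral μ (X i * X j * (X k * X l)) = 0
        rw [hmul, h2, zero_mul]

end Aux

section Aux2
variable {Ω : Type*} [MeasurableSpace Ω] {μ : Measure Ω} [IsProbabilityMeasure μ]
  {X : ℕ → Ω → ℝ}

lemma rad_term_bound (hmeas : ∀ i, Measurable (X i))
    (hrange : ∀ i ω, X i ω = 1 ∨ X i ω = -1)
    (hdist : ∀ i, μ {ω | X i ω = 1} = 1/2)
    (h4indep : ∀ s : Finset ℕ, s.card ≤ 4 →
      iIndepFun (fun i : s => X i) μ)
    (i j k l : ℕ) :
    ∫ ω, X i ω * X j ω * X k ω * X l ω ∂μ ≤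
      (if i = j then (1:ℝ) else 0) * (if k = l then (1:ℝ) else 0)
      + (if i = k then (1:ℝ) else 0) * (if j = l then (1:ℝ) else 0)
      + (if i = l then (1:ℝ) else 0) * (if j = k then (1:ℝ) else 0) := by
  have hone : ∀ (a b : ℕ), (∀ ω, X a ω * X a ω * (X b ω * X b ω) = 1) := by
    intro a b ω
    rcases hrange a ω with h|h <;> rcases hrange b ω with h'|h' <;> rw [h, h'] <;> norm_num
  have hint1 : ∫ ω, (1:ℝ) ∂μ = 1 := by simp
  by_cases hij : i = j
  · subst hij
    by_cases hkl : k = l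
    · subst hkl
      have : ∫ ω, X i ω * X i ω * X k ω * X k ω ∂μ = 1 := by
        rw [show (fun ω => X i ω * X i ω * X k ω * X k ω) = fun _ => (1:ℝ) from
          funext fun ω => by rw [← hone i k ω]; ring, hint1]
      rw [this]; split_ifs <;> simp_all
    · have : ∫ ω, X i ω * X i ω * X k ω * X l ω ∂μ = 0 := by
        rw [show (fun ω => X i ω * X i ω * X k ω * X l ω)
            = fun ω => X k ω * X l ω from funext fun ω => by
          rcases hrange i ω with h|h <;> rw [h] <;> ring]
        exact rad_EXX hmeas hrange hdist h4indep hkl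
      rw [this]; split_ifs <;> simp_all
  · by_cases hkl : k = l
    · subst hkl
      have : ∫ ω, X i ω * X j ω * X k ω * X k ω ∂μ = 0 := by
        rw [show (fun ω => X i ω * X j ω * X k ω * X k ω)
            = fun ω => X i ω * X j ω from funext fun ω => by
          rcases hrange k ω with h|h <;> rw [h] <;> ring]
        exact rad_EXX hmeas hrange hdist h4indep hij
      rw [this]; split_ifs <;> simp_all
    · by_cases hik : i = k
      · subst hik
        by_cases hjl : j = l
        · subst hjl
          have : ∫ ω, X i ω * X j ω * X i ω * X j ω ∂μ = 1 := by
            rw [show (fun ω => X i ω * X j ω * X i ω * X j ω) = fun _ => (1:ℝ) from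
              funext fun ω => by rw [← hone i j ω]; ring, hint1]
          rw [this]; split_ifs <;> simp_all
        · have : ∫ ω, X i ω * X j ω * X i ω * X l ω ∂μ = 0 := by
            rw [show (fun ω => X i ω * X j ω * X i ω * X l ω)
                = fun ω => X j ω * X l ω from funext fun ω => by
              rcases hrange i ω with h|h <;> rw [h] <;> ring]
            exact rad_EXX hmeas hrange hdist h4indep hjl
          rw [this]; split_ifs <;> simp_all
      · by_cases hil : i = l
        · subst hil
          by_cases hjk : j = k
          · subst hjk
            have : ∫ ω, X i ω * X j ω * X j ω * X i ω ∂μ = 1 := by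
              rw [show (fun ω => X i ω * X j ω * X j ω * X i ω) = fun _ => (1:ℝ) from
                funext fun ω => by rw [← hone i j ω]; ring, hint1]
            rw [this]; split_ifs <;> simp_all
          · have : ∫ ω, X i ω * X j ω * X k ω * X i ω ∂μ = 0 := by
              rw [show (fun ω => X i ω * X j ω * X k ω * X i ω)
                  = fun ω => X j ω * X k ω from funext fun ω => by
                rcases hrange i ω with h|h <;> rw [h] <;> ring]
              exact rad_EXX hmeas hrange hdist h4indep hjk
            rw [this]; split_ifs <;> simp_all
        · by_cases hjk : j = k
          · subst hjk
            have : ∫ ω, X i ω * X j ω * X j ω * X l ω ∂μ = 0 := by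
              rw [show (fun ω => X i ω * X j ω * X j ω * X l ω)
                  = fun ω => X i ω * X l ω from funext fun ω => by
                rcases hrange j ω with h|h <;> rw [h] <;> ring]
              exact rad_EXX hmeas hrange hdist h4indep hil
            rw [this]; split_ifs <;> simp_all
          · by_cases hjl : j = l
            · subst hjl
              have : ∫ ω, X i ω * X j ω * X k ω * X j ω ∂μ = 0 := by
                rw [show (fun ω => X i ω * X j ω * X k ω * X j ω)
                    = fun ω => X i ω * X k ω from funext fun ω => by
                  rcases hrange j ω with h|h <;> rw [h] <;> ring]
                exact rad_EXX hmeas hrange hdist h4indep hik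
              rw [this]; split_ifs <;> simp_all
            · rw [rad_EXXXX hmeas hrange hdist h4indep hij hik hil hjk hjl hkl]
              split_ifs <;> simp_all

end Aux2

section Aux3
variable {Ω : Type*} [MeasurableSpace Ω] {μ : Measure Ω} [IsProbabilityMeasure μ]
  {X : ℕ → Ω → ℝ}

lemma rad_intXX (hmeas : ∀ i, Measurable (X i))
    (hrange : ∀ i ω, X i ω = 1 ∨ X i ω = -1) (a b : ℕ) :
    Integrable (fun ω => X a ω * X b ω) μ :=
  rad_int ((hmeas a).mul (hmeas b)) (c := 1) (fun ω => by
    rcases hrange a ω with h|h <;> rcases hrange b ω with h'|h' <;> simp [h, h'])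

lemma rad_intXXXX (hmeas : ∀ i, Measurable (X i))
    (hrange : ∀ i ω, X i ω = 1 ∨ X i ω = -1) (a b c d : ℕ) :
    Integrable (fun ω => X a ω * X b ω * X c ω * X d ω) μ :=
  rad_int (((((hmeas a).mul (hmeas b)).mul (hmeas c)).mul (hmeas d))) (c := 1) (fun ω => by
    rcases hrange a ω with h|h <;> rcases hrange b ω with h'|h' <;>
      rcases hrange c ω with h''|h'' <;> rcases hrange d ω with h'''|h''' <;>
      simp [h, h', h'', h'''])

lemma rad_ES2 (hmeas : ∀ i, Measurable (X i)) (hrange : ∀ i ω, X i ω = 1 ∨ X i ω = -1)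
    (hdist : ∀ i, μ {ω | X i ω = 1} = 1/2)
    (h4indep : ∀ s : Finset ℕ, s.card ≤ 4 →
      iIndepFun (fun i : s => X i) μ) (n : ℕ) :
    ∫ ω, (∑ i ∈ Finset.range n, X i ω)^2 ∂μ = n := by
  have hexp : ∀ ω, (∑ i ∈ Finset.range n, X i ω)^2
      = ∑ i ∈ Finset.range n, ∑ j ∈ Finset.range n, X i ω * X j ω := by
    intro ω; rw [sq, Finset.sum_mul_sum]
  rw [integral_congr_ae (Filter.Eventually.of_forall hexp),
    integral_finset_sum _ (fun i _ => integrable_finset_sum _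
      (fun j _ => rad_intXX hmeas hrange i j))]
  have : ∀ i ∈ Finset.range n, ∫ ω, ∑ j ∈ Finset.range n, X i ω * X j ω ∂μ
      = ∑ j ∈ Finset.range n, ∫ ω, X i ω * X j ω ∂μ :=
    fun i _ => integral_finset_sum _ (fun j _ => rad_intXX hmeas hrange i j)
  rw [Finset.sum_congr rfl this]
  have hterm : ∀ i j : ℕ, ∫ ω, X i ω * X j ω ∂μ = if i = j then 1 else 0 := by
    intro i j
    by_cases hij : i = j
    · subst hij
      rw [if_pos rfl, show (fun ω => X i ω * X i ω) = fun _ => (1:ℝ) from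
        funext fun ω => by rcases hrange i ω with h|h <;> rw [h] <;> norm_num]
      simp
    · rw [if_neg hij]; exact rad_EXX hmeas hrange hdist h4indep hij
  simp only [hterm]
  simp [Finset.sum_ite_eq]
  rw [Finset.filter_true_of_mem (fun x hx => Finset.mem_range.mp hx), Finset.card_range]

lemma rad_ES4 (hmeas : ∀ i, Measurable (X i)) (hrange : ∀ i ω, X i ω = 1 ∨ X i ω = -1)
    (hdist : ∀ i, μ {ω | X i ω = 1} = 1/2)
    (h4indep : ∀ s : Finset ℕ, s.card ≤ 4 →
      iIndepFun (fun i : s => X i) μ) (n : ℕ) :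
    ∫ ω, (∑ i ∈ Finset.range n, X i ω)^4 ∂μ ≤ 3 * (n:ℝ)^2 := by
  have hexp : ∀ ω, (∑ i ∈ Finset.range n, X i ω)^4
      = ∑ i ∈ Finset.range n, ∑ j ∈ Finset.range n, ∑ k ∈ Finset.range n,
          ∑ l ∈ Finset.range n, X i ω * X j ω * X k ω * X l ω := by
    intro ω
    rw [show (∑ i ∈ Finset.range n, X i ω)^4
        = (∑ i ∈ Finset.range n, X i ω) * (∑ j ∈ Finset.range n, X j ω)
          * (∑ k ∈ Finset.range n, X k ω) * (∑ l ∈ Finset.range n, X l ω) from by ring]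
    simp only [Finset.sum_mul, Finset.mul_sum]
    exact Finset.sum_congr rfl fun _ _ => Finset.sum_congr rfl fun _ _ =>
      Finset.sum_congr rfl fun _ _ => Finset.sum_congr rfl fun _ _ => by ring
  rw [integral_congr_ae (Filter.Eventually.of_forall hexp)]
  rw [integral_finset_sum _ (fun i _ => integrable_finset_sum _ (fun j _ =>
    integrable_finset_sum _ (fun k _ => integrable_finset_sum _ (fun l _ =>
      rad_intXXXX hmeas hrange i j k l))))]
  have h1 : ∀ i ∈ Finset.range n,
      ∫ ω, ∑ j ∈ Finset.range n, ∑ k ∈ Finset.range n, ∑ l ∈ Finset.range n,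
          X i ω * X j ω * X k ω * X l ω ∂μ
      = ∑ j ∈ Finset.range n, ∑ k ∈ Finset.range n, ∑ l ∈ Finset.range n,
          ∫ ω, X i ω * X j ω * X k ω * X l ω ∂μ := by
    intro i _
    rw [integral_finset_sum _ (fun j _ => integrable_finset_sum _ (fun k _ =>
      integrable_finset_sum _ (fun l _ => rad_intXXXX hmeas hrange i j k l)))]
    exact Finset.sum_congr rfl fun j _ => by
      rw [integral_finset_sum _ (fun k _ => integrable_finset_sum _ (fun l _ =>
        rad_intXXXX hmeas hrange i j k l))]
      exact Finset.sum_congr rfl fun k _ =>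
        integral_finset_sum _ (fun l _ => rad_intXXXX hmeas hrange i j k l)
  rw [Finset.sum_congr rfl h1]
  have hb : ∑ i ∈ Finset.range n, ∑ j ∈ Finset.range n, ∑ k ∈ Finset.range n,
        ∑ l ∈ Finset.range n, ∫ ω, X i ω * X j ω * X k ω * X l ω ∂μ
      ≤ ∑ i ∈ Finset.range n, ∑ j ∈ Finset.range n, ∑ k ∈ Finset.range n,
        ∑ l ∈ Finset.range n,
        ((if i = j then (1:ℝ) else 0) * (if k = l then (1:ℝ) else 0)
        + (if i = k then (1:ℝ) else 0) * (if j = l then (1:ℝ) else 0)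
        + (if i = l then (1:ℝ) else 0) * (if j = k then (1:ℝ) else 0)) := by
    refine Finset.sum_le_sum fun i _ => Finset.sum_le_sum fun j _ =>
      Finset.sum_le_sum fun k _ => Finset.sum_le_sum fun l _ =>
      rad_term_bound hmeas hrange hdist h4indep i j k l
  refine hb.trans ?_
  have : ∑ i ∈ Finset.range n, ∑ j ∈ Finset.range n, ∑ k ∈ Finset.range n,
        ∑ l ∈ Finset.range n,
        ((if i = j then (1:ℝ) else 0) * (if k = l then (1:ℝ) else 0)
        + (if i = k then (1:ℝ) else 0) * (if j = l then (1:ℝ) else 0)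
        + (if i = l then (1:ℝ) else 0) * (if j = k then (1:ℝ) else 0))
      = 3 * (n:ℝ)^2 := by
    simp only [Finset.sum_add_distrib, ← Finset.mul_sum, ← Finset.sum_mul,
      Finset.sum_ite_eq, Finset.sum_ite_eq']
    simp [Finset.sum_ite_eq, Finset.sum_ite_eq', Finset.mul_sum, Finset.sum_mul,
      Finset.sum_ite_mem, Finset.sum_const, Finset.card_range]
    rw [Finset.filter_true_of_mem (fun x hx => Finset.mem_range.mp hx)]
    simp [Finset.card_range]; ring
  rw [this]

end Aux3

/-- There is no sequence of `4`-wise independent Rademacher variables whose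
partial sums are almost surely bounded. -/
theorem no_bounded_fourwise_independent_walk
    {Ω : Type*} [MeasurableSpace Ω] (μ : Measure Ω) [IsProbabilityMeasure μ]
    (X : ℕ → Ω → ℝ) (hmeas : ∀ i, Measurable (X i))
    (hrange : ∀ i ω, X i ω = 1 ∨ X i ω = -1)
    (hdist : ∀ i, μ {ω | X i ω = 1} = 1/2)
    (h4indep : ∀ s : Finset ℕ, s.card ≤ 4 →
      iIndepFun (fun i : s => X i) μ) :
    ¬ (μ {ω | ∃ C : ℝ, ∀ n : ℕ, |∑ i ∈ Finset.range n, X i ω| ≤ C} = 1) := by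
  intro hbound
  set S : ℕ → Ω → ℝ := fun n ω => ∑ i ∈ Finset.range n, X i ω with hS
  have hSmeas : ∀ n, Measurable (S n) := fun n =>
    Finset.measurable_sum _ (fun i _ => hmeas i)
  have habsS : ∀ n ω, |S n ω| ≤ n := by
    intro n ω
    calc |S n ω| ≤ ∑ i ∈ Finset.range n, |X i ω| := Finset.abs_sum_le_sum_abs _ _
      _ ≤ ∑ i ∈ Finset.range n, 1 := Finset.sum_le_sum (fun i _ => by
          rcases hrange i ω with h|h <;> simp [h])
      _ = n := by simp
  set A : ℕ → Set Ω := fun C => {ω | ∀ n, |S n ω| ≤ (C : ℝ)} with hA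
  have hAmeas : ∀ C : ℕ, MeasurableSet (A C) := by
    intro C
    have : A C = ⋂ n, {ω | |S n ω| ≤ (C : ℝ)} := by
      ext ω; simp [hA, Set.mem_iInter, Set.mem_setOf_eq]
    rw [this]
    exact MeasurableSet.iInter fun n =>
      measurableSet_le ((hSmeas n).abs) measurable_const
  have hE : {ω | ∃ C : ℝ, ∀ n : ℕ, |∑ i ∈ Finset.range n, X i ω| ≤ C}
      = ⋃ C : ℕ, A C := by
    ext ω
    constructor
    · rintro ⟨C, hC⟩
      exact Set.mem_iUnion.mpr ⟨⌈C⌉₊, fun n => (hC n).trans (Nat.le_ceil C)⟩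
    · rintro h
      rcases Set.mem_iUnion.mp h with ⟨C, hC⟩
      exact ⟨C, hC⟩
  rw [hE] at hbound
  have hmono : Monotone A := by
    intro a b hab ω h n
    exact (h n).trans (by exact_mod_cast hab)
  have hdir : Directed (· ⊆ ·) A := hmono.directed_le
  have hsup : (⨆ C, μ (A C)) = 1 := by rw [← hdir.measure_iUnion, hbound]
  have hlt : (47/48 : ℝ≥0∞) < ⨆ C, μ (A C) := by
    rw [hsup]
    rw [ENNReal.div_lt_iff (by norm_num) (by norm_num)]
    norm_num
  obtain ⟨C, hC⟩ := lt_iSup_iff.mp hlt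
  -- real-valued complement bound
  have hACle : (μ (A C)).toReal ≤ 1 := by
    simpa using ENNReal.toReal_mono ENNReal.one_ne_top prob_le_one
  have hCr : (47:ℝ)/48 ≤ (μ (A C)).toReal := by
    have := ENNReal.toReal_mono (measure_ne_top μ _) hC.le
    rw [ENNReal.toReal_div] at this
    simpa using this
  have hcompl : ((μ (A C)ᶜ)).toReal ≤ 1/48 := by
    rw [measure_compl (hAmeas C) (measure_ne_top μ _), measure_univ,
      ENNReal.toReal_sub_of_le prob_le_one ENNReal.one_ne_top]
    simp only [ENNReal.toReal_one]
    linarith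
  -- choose n
  set n : ℕ := 2 * C^2 + 1 with hn
  have hnpos : (0:ℝ) < 12 * n := by positivity
  -- integrability
  have hint2 : Integrable (fun ω => (S n ω)^2) μ := by
    refine rad_int ((hSmeas n).pow_const 2) (c := (n:ℝ)^2) (fun ω => ?_)
    rw [abs_pow]
    exact pow_le_pow_left₀ (abs_nonneg _) (habsS n ω) 2
  have hint4 : Integrable (fun ω => (S n ω)^4) μ := by
    refine rad_int ((hSmeas n).pow_const 4) (c := (n:ℝ)^4) (fun ω => ?_)
    rw [abs_pow]
    exact pow_le_pow_left₀ (abs_nonneg _) (habsS n ω) 4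
  have hES2 : ∫ ω, (S n ω)^2 ∂μ = n := rad_ES2 hmeas hrange hdist h4indep n
  have hES4 : ∫ ω, (S n ω)^4 ∂μ ≤ 3 * (n:ℝ)^2 := rad_ES4 hmeas hrange hdist h4indep n
  -- split integral
  have hsplit : ∫ ω in A C, (S n ω)^2 ∂μ + ∫ ω in (A C)ᶜ, (S n ω)^2 ∂μ
      = ∫ ω, (S n ω)^2 ∂μ := integral_add_compl (hAmeas C) hint2
  -- part 1
  have hpart1 : ∫ ω in A C, (S n ω)^2 ∂μ ≤ (C:ℝ)^2 := by
    calc ∫ ω in A C, (S n ω)^2 ∂μ ≤ ∫ _ω in A C, (C:ℝ)^2 ∂μ := by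
          refine setIntegral_mono_on hint2.integrableOn
            (integrableOn_const (measure_ne_top μ _)) (hAmeas C) ?_
          intro ω hω
          have h1 := hω n
          nlinarith [abs_nonneg (S n ω), sq_abs (S n ω)]
      _ = (μ (A C)).toReal • (C:ℝ)^2 := setIntegral_const _
      _ ≤ (C:ℝ)^2 := by
          rw [smul_eq_mul]
          nlinarith [hACle, ENNReal.toReal_nonneg (a := μ (A C))]
  -- part 2
  have hpt : ∀ ω, (S n ω)^2 ≤ 12 * n + (S n ω)^4 / (12 * n) := by
    intro ω
    have hc : (S n ω)^4 / (12*(n:ℝ)) * (12*n) = (S n ω)^4 :=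
      div_mul_cancel₀ _ (ne_of_gt hnpos)
    have hmul : 12*(n:ℝ) * (S n ω)^2 ≤ 12*(n:ℝ) * (12*n + (S n ω)^4/(12*n)) := by
      nlinarith [sq_nonneg ((S n ω)^2 - 12*(n:ℝ)),
        mul_nonneg hnpos.le (sq_nonneg (S n ω))]
    exact le_of_mul_le_mul_left hmul hnpos
  have hintRHS : Integrable (fun ω => 12 * (n:ℝ) + (S n ω)^4 / (12 * n)) μ :=
    (integrable_const _).add (hint4.div_const _)
  have hpart2 : ∫ ω in (A C)ᶜ, (S n ω)^2 ∂μ ≤ (n:ℝ)/2 := by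
    have step1 : ∫ ω in (A C)ᶜ, (S n ω)^2 ∂μ
        ≤ ∫ ω in (A C)ᶜ, (12 * (n:ℝ) + (S n ω)^4 / (12 * n)) ∂μ :=
      setIntegral_mono_on hint2.integrableOn hintRHS.integrableOn
        (hAmeas C).compl (fun ω _ => hpt ω)
    have step2 : ∫ ω in (A C)ᶜ, (12 * (n:ℝ) + (S n ω)^4 / (12 * n)) ∂μ
        = (μ (A C)ᶜ).toReal * (12 * n) + (∫ ω in (A C)ᶜ, (S n ω)^4 ∂μ) / (12 * n) := by
      rw [integral_add (integrableOn_const (C := 12 * (n:ℝ)) (measure_ne_top μ _))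
        (hint4.div_const _).integrableOn, setIntegral_const, integral_div, smul_eq_mul, measureReal_def]
    have step3 : ∫ ω in (A C)ᶜ, (S n ω)^4 ∂μ ≤ 3 * (n:ℝ)^2 :=
      le_trans (setIntegral_le_integral hint4
        (Filter.Eventually.of_forall (fun ω => by positivity))) hES4
    have hnn : (0:ℝ) ≤ (n:ℝ) := Nat.cast_nonneg n
    have hdivle : (∫ ω in (A C)ᶜ, (S n ω)^4 ∂μ) / (12 * n) ≤ (n:ℝ)/4 := by
      rw [div_le_iff₀ hnpos]
      calc ∫ ω in (A C)ᶜ, (S n ω)^4 ∂μ ≤ 3 * (n:ℝ)^2 := step3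
        _ = (n:ℝ)/4 * (12 * n) := by ring
    have hfirst : (μ (A C)ᶜ).toReal * (12 * (n:ℝ)) ≤ (n:ℝ)/4 := by
      calc (μ (A C)ᶜ).toReal * (12 * (n:ℝ)) ≤ (1/48) * (12 * (n:ℝ)) := by
            apply mul_le_mul_of_nonneg_right hcompl (by positivity)
        _ = (n:ℝ)/4 := by ring
    calc ∫ ω in (A C)ᶜ, (S n ω)^2 ∂μ
        ≤ (μ (A C)ᶜ).toReal * (12 * n) + (∫ ω in (A C)ᶜ, (S n ω)^4 ∂μ) / (12 * n) := by
          rw [← step2]; exact step1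
      _ ≤ (n:ℝ)/4 + (n:ℝ)/4 := add_le_add hfirst hdivle
      _ = (n:ℝ)/2 := by ring
  -- conclusion
  have hfinal : (n:ℝ) ≤ (C:ℝ)^2 + (n:ℝ)/2 := by
    have h := hsplit
    rw [hES2] at h
    linarith [hpart1, hpart2]
  have hC2 : (n:ℝ) = 2 * (C:ℝ)^2 + 1 := by
    rw [hn]; push_cast; ring
  rw [hC2] at hfinal
  linarith
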